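/- The Onsager algebra O (with basis {A_m, G_l} and Onsager's relations) is generated as a Lie algebra by the two elements A_0 and A_1. -/

import Mathlib

/-- The Onsager algebra `O` — the Lie algebra over a field `k` of characteristic zero with
basis `{A_m : m ∈ ℤ} ∪ {G_l : l ≥ 1}`, bracket `[A_l, A_m] = 2 G_{l-m}` for `l > m`,
`[G_l, A_m] = A_{m+l} - A_{m-l}`, `[G_l, G_m] = 0` (`l, m ≥ 1`), and conventions `G_0 = 0`,
`G_{-m} = -G_m` — is generated as a Lie algebra by the two elements `A_0` and `A_1`. -/
theorem stmt_5 {k : Type*} [Field k] [CharZero k]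
    {O : Type*} [LieRing O] [LieAlgebra k O]
    (A G : ℤ → O)
    (bas : Module.Basis (ℤ ⊕ {l : ℤ // 0 < l}) k O)
    (hbas : ∀ i, bas i = Sum.elim A (fun l => G l.1) i)
    (hG0 : G 0 = 0) (hGneg : ∀ m : ℤ, G (-m) = -G m)
    (hAA : ∀ l m : ℤ, m < l → ⁅A l, A m⁆ = (2 : k) • G (l - m))
    (hGA : ∀ l m : ℤ, 0 < l → ⁅G l, A m⁆ = A (m + l) - A (m - l))
    (hGG : ∀ l m : ℤ, 0 < l → 0 < m → ⁅G l, G m⁆ = 0) :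
    LieSubalgebra.lieSpan k O {A 0, A 1} = ⊤ := by
  set S := LieSubalgebra.lieSpan k O {A 0, A 1} with hS
  have hA0 : A 0 ∈ S := LieSubalgebra.subset_lieSpan (by simp)
  have hA1 : A 1 ∈ S := LieSubalgebra.subset_lieSpan (by simp)
  have hG1 : G 1 ∈ S := by
    have h2 : (2 : k) • G 1 ∈ S := by
      have := hAA 1 0 (by norm_num)
      simp only [sub_zero] at this
      rw [← this]
      exact S.lie_mem hA1 hA0
    have : G 1 = (2 : k)⁻¹ • ((2 : k) • G 1) := by
      rw [smul_smul, inv_mul_cancel₀ (two_ne_zero), one_smul]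
    rw [this]
    exact S.smul_mem _ h2
  -- all A m are in S
  have stepu : ∀ m : ℤ, A (m + 1) = ⁅G 1, A m⁆ + A (m - 1) := by
    intro m; rw [hGA 1 m one_pos]; abel
  have stepd : ∀ m : ℤ, A (m - 1) = A (m + 1) - ⁅G 1, A m⁆ := by
    intro m; rw [hGA 1 m one_pos]; abel
  have hA : ∀ m : ℤ, A m ∈ S ∧ A (m + 1) ∈ S := by
    intro m
    induction m using Int.induction_on with
    | zero => exact ⟨hA0, by simpa using hA1⟩
    | succ i ih =>
      refine ⟨ih.2, ?_⟩
      rw [stepu (i + 1)]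
      simpa using S.add_mem (S.lie_mem hG1 ih.2) ih.1
    | pred i ih =>
      refine ⟨?_, by simpa using ih.1⟩
      have h := stepd (-i)
      rw [show -(i : ℤ) - 1 = -(i : ℤ) - 1 + 1 - 1 by ring, show -(i : ℤ) - 1 + 1 = -(i : ℤ) by ring, h]
      exact S.sub_mem ih.2 (S.lie_mem hG1 ih.1)
  have hAmem : ∀ m : ℤ, A m ∈ S := fun m => (hA m).1
  have hGmem : ∀ l : ℤ, 0 < l → G l ∈ S := by
    intro l hl
    have h2 : (2 : k) • G l ∈ S := by
      have := hAA l 0 hl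
      simp only [sub_zero] at this
      rw [← this]
      exact S.lie_mem (hAmem l) hA0
    have : G l = (2 : k)⁻¹ • ((2 : k) • G l) := by
      rw [smul_smul, inv_mul_cancel₀ (two_ne_zero), one_smul]
    rw [this]
    exact S.smul_mem _ h2
  rw [eq_top_iff]
  intro x _
  have hx : x ∈ Submodule.span k (Set.range bas) := by
    rw [bas.span_eq]; trivial
  refine Submodule.span_le.2 ?_ hx
  rintro y ⟨i, rfl⟩
  rw [hbas i]
  cases i with
  | inl m => exact hAmem m
  | inr l => exact hGmem l.1 l.2
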